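/- Let n, k be natural numbers with n ≥ 3k − 2. There exists a 3-colouring of the edges of K_n such that every k-connected subgraph of K_n using at most 2 of the 3 colours has at most n − k + 1 vertices; that is, m(n,3,2,k) ≤ n − k + 1. -/

import Mathlib

private def colFn : Fin 4 → Fin 4 → Fin 3 :=
  fun a b => ![![0,2,1,2],![2,0,0,0],![1,0,0,1],![2,0,1,0]] a b

private lemma colFn_symm : ∀ a b, colFn a b = colFn b a := by decide

private lemma colFn_key : ∀ (c : Fin 3) (a b : Fin 4),
    a = Fin.castSucc (c+1) → b ≠ Fin.castSucc (c+1) → b ≠ Fin.castSucc c →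
    colFn a b = c := by decide

private def partFn (m : ℕ) {n : ℕ} (v : Fin n) : Fin 4 :=
  if v.val < m then 0 else if v.val < 2*m then 1 else if v.val < 3*m then 2 else 3

private lemma partFn_iff (m : ℕ) {n : ℕ} (d : Fin 4) (hd : d.val < 3) (v : Fin n) :
    partFn m v = d ↔ d.val * m ≤ v.val ∧ v.val < (d.val + 1) * m := by
  fin_cases d <;> simp only [partFn, Fin.ext_iff] at * <;> split_ifs <;> simp_all <;> omega

private lemma ncard_partFn (m : ℕ) {n : ℕ} (d : Fin 4) (hd : d.val < 3) (hn : 3*m ≤ n) :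
    {v : Fin n | partFn m v = d}.ncard = m := by
  have hb : (d.val+1)*m ≤ n := le_trans (Nat.mul_le_mul_right _ (by omega)) hn
  have hset : {v : Fin n | partFn m v = d}
      = {v : Fin n | d.val*m ≤ v.val ∧ v.val < (d.val+1)*m} := by
    ext v; exact partFn_iff m d hd v
  rw [hset, Set.ncard_eq_toFinset_card']
  have : Set.toFinset {v : Fin n | d.val*m ≤ v.val ∧ v.val < (d.val+1)*m}
      = (Finset.Ico (d.val*m) ((d.val+1)*m)).attachFin
        (fun x hx => lt_of_lt_of_le (Finset.mem_Ico.1 hx).2 hb) := by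
    ext v; simp [Finset.mem_attachFin, Finset.mem_Ico]
  rw [this, Finset.card_attachFin, Nat.card_Ico]
  have : (d.val+1)*m = d.val*m + m := by ring
  omega

/-- A graph `G` is `k`-connected if it has at least `k+1` vertices and removing any
set of at most `k-1` vertices leaves a connected graph. -/
def IsKConnected (k : ℕ) {V : Type*} (G : SimpleGraph V) : Prop :=
  k + 1 ≤ Nat.card V ∧
  ∀ S : Set V, Nat.card S ≤ k - 1 → (G.induce Sᶜ).Connected

theorem stmt_10 (n k : ℕ) (hn : 2 ≤ n) (h : 3 * k ≤ n + 2) :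
    ∃ f : Sym2 (Fin n) → Fin 3,
      ∀ H : (⊤ : SimpleGraph (Fin n)).Subgraph,
        IsKConnected k H.coe →
        (∃ C : Finset (Fin 3), C.card ≤ 2 ∧ ∀ e ∈ H.edgeSet, f e ∈ C) →
        Nat.card H.verts ≤ n - k + 1 := by
  rcases Nat.lt_or_ge k 2 with hk | hk
  · refine ⟨fun _ => 0, fun H _ _ => ?_⟩
    have h1 : Nat.card H.verts ≤ n := by
      rw [Nat.card_coe_set_eq]
      calc H.verts.ncard ≤ (Set.univ : Set (Fin n)).ncard :=
            Set.ncard_le_ncard (Set.subset_univ _) Set.finite_univ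
        _ = n := by simp [Set.ncard_univ]
    omega
  · set m := k - 1 with hm
    have h3m : 3*m < n := by omega
    refine ⟨Sym2.lift ⟨fun u v => colFn (partFn m u) (partFn m v),
      fun u v => colFn_symm _ _⟩, ?_⟩
    rintro H hconn ⟨C, hC2, hCmem⟩
    obtain ⟨c, hc⟩ : ∃ c : Fin 3, c ∉ C := by
      by_contra hall
      push_neg at hall
      have : C = Finset.univ := Finset.eq_univ_iff_forall.2 hall
      rw [this] at hC2
      simp [Finset.card_univ] at hC2
    set d0 := Fin.castSucc c with hd0def
    set d1 := Fin.castSucc (c+1) with hd1def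
    have hd0 : d0.val < 3 := by rw [hd0def, Fin.coe_castSucc]; exact c.isLt
    have hd1 : d1.val < 3 := by rw [hd1def, Fin.coe_castSucc]; exact (c+1).isLt
    have hd01 : d1 ≠ d0 := by
      have : ∀ c : Fin 3, Fin.castSucc (c+1) ≠ Fin.castSucc c := by decide
      exact this c
    set S : Set H.verts := {v | partFn m (v : Fin n) = d0} with hS
    have hScard : Nat.card S ≤ k - 1 := by
      have hinj : Nat.card S ≤ Nat.card {v : Fin n | partFn m v = d0} := by
        exact Nat.card_le_card_of_injective
          (fun v : S => (⟨(v : Fin n), v.2⟩ : {v : Fin n | partFn m v = d0}))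
          (fun a b hab => Subtype.ext (Subtype.ext
            (congrArg (Subtype.val : {v : Fin n | partFn m v = d0} → Fin n) hab)))
      rw [Nat.card_coe_set_eq, Nat.card_coe_set_eq,
        ncard_partFn m d0 hd0 (le_of_lt h3m)] at hinj
      rw [Nat.card_coe_set_eq]
      omega
    have hconn' := hconn.2 S hScard
    -- dichotomy
    have hdich : (∀ v ∈ H.verts, partFn m v ≠ d1) ∨
        (∀ v ∈ H.verts, partFn m v = d0 ∨ partFn m v = d1) := by
      by_contra hcon
      push_neg at hcon
      obtain ⟨⟨x, hx, hx1⟩, ⟨y, hy, hy1, hy2⟩⟩ := hcon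
      have hxS : (⟨x, hx⟩ : H.verts) ∈ Sᶜ := by
        simp only [hS, Set.mem_compl_iff, Set.mem_setOf_eq]
        rw [hx1]; exact hd01
      have hyS : (⟨y, hy⟩ : H.verts) ∈ Sᶜ := by
        simp only [hS, Set.mem_compl_iff, Set.mem_setOf_eq]
        exact hy1
      have inv : ∀ (a b : (Sᶜ : Set H.verts)) (w : (H.coe.induce Sᶜ).Walk a b),
          partFn m ((a : H.verts) : Fin n) = d1 → partFn m ((b : H.verts) : Fin n) = d1 := by
        intro a b w
        induction w with
        | nil => exact id
        | @cons u v r hadj w ih =>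
          intro ha
          apply ih
          have hAdj : H.Adj ((u : H.verts) : Fin n) ((v : H.verts) : Fin n) := by
            simpa using hadj
          have hedge : s(((u : H.verts) : Fin n), ((v : H.verts) : Fin n))
              ∈ H.edgeSet := hAdj
          have hfC := hCmem _ hedge
          simp only [Sym2.lift_mk] at hfC
          by_contra hne
          have hvS : partFn m ((v : H.verts) : Fin n) ≠ d0 := v.2
          have := colFn_key c _ _ ha hne hvS
          rw [this] at hfC
          exact hc hfC
      obtain ⟨w⟩ := hconn'.preconnected ⟨⟨x, hx⟩, hxS⟩ ⟨⟨y, hy⟩, hyS⟩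
      exact hy2 (inv _ _ w hx1)
    have hcard : Nat.card H.verts = H.verts.ncard := Nat.card_coe_set_eq _
    rcases hdich with hleft | hright
    · have hsub : H.verts ⊆ {v : Fin n | partFn m v = d1}ᶜ := fun v hv => hleft v hv
      have h1 : H.verts.ncard ≤ ({v : Fin n | partFn m v = d1}ᶜ).ncard :=
        Set.ncard_le_ncard hsub (Set.toFinite _)
      have h2 := Set.ncard_add_ncard_compl {v : Fin n | partFn m v = d1}
        (Set.toFinite _) (Set.toFinite _)
      rw [ncard_partFn m d1 hd1 (le_of_lt h3m)] at h2
      have h3 : Nat.card (Fin n) = n := by simp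
      omega
    · have hsub : H.verts ⊆ {v : Fin n | partFn m v = d0} ∪ {v : Fin n | partFn m v = d1} :=
        fun v hv => by rcases hright v hv with h' | h' <;> [left; right] <;> exact h'
      have h1 : H.verts.ncard ≤
          ({v : Fin n | partFn m v = d0} ∪ {v : Fin n | partFn m v = d1}).ncard :=
        Set.ncard_le_ncard hsub (Set.toFinite _)
      have h2 := Set.ncard_union_le {v : Fin n | partFn m v = d0} {v : Fin n | partFn m v = d1}
      rw [ncard_partFn m d0 hd0 (le_of_lt h3m), ncard_partFn m d1 hd1 (le_of_lt h3m)] at h2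
      omega
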